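/- Let (F ∪ C, d) be a metric space, 0 < ε < 1/10. For a client c ∈ C and nonempty X ⊆ F, say c is X-exclusive if (i) for all f1, f2 ∈ X, d(f1,f2) ≤ ε·d(c,X), and (ii) for all f ∈ F∖X, max_{f'∈X} d(c,f') ≤ ε·d(c,f). Then the family {X ⊆ F : some client is X-exclusive} is laminar: if X ∩ Y ≠ ∅ for two members X, Y of the family, then X ⊆ Y or Y ⊆ X. -/
import Mathlib


/-- A client `c` is `X`-exclusive (w.r.t. facility set `F` and parameter `ε`):
`X` is a nonempty subset of `F`, (i) `d(f₁,f₂) ≤ ε·d(c,X)` for all `f₁,f₂ ∈ X`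
(equivalently `d(f₁,f₂) ≤ ε·d(c,f)` for every `f ∈ X`), and
(ii) `max_{f'∈X} d(c,f') ≤ ε·d(c,f)` for every `f ∈ F \ X`. -/
def Exclusive {V : Type*} [MetricSpace V] (ε : ℝ) (F : Finset V) (c : V)
    (X : Finset V) : Prop :=
  X ⊆ F ∧ X.Nonempty ∧
  (∀ f1 ∈ X, ∀ f2 ∈ X, ∀ f ∈ X, dist f1 f2 ≤ ε * dist c f) ∧
  (∀ f ∈ F, f ∉ X → ∀ f' ∈ X, dist c f' ≤ ε * dist c f)

/-- The family `{X ⊆ F : some client is X-exclusive}` is laminar. -/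
theorem stmt7 {V : Type*} [MetricSpace V] [DecidableEq V] (F C : Finset V) (ε : ℝ)
    (hε0 : 0 < ε) (hε1 : ε < 1 / 10)
    (X Y : Finset V)
    (hX : ∃ c ∈ C, Exclusive ε F c X) (hY : ∃ c ∈ C, Exclusive ε F c Y)
    (hXY : (X ∩ Y).Nonempty) :
    X ⊆ Y ∨ Y ⊆ X := by
  by_contra h
  push_neg at h
  obtain ⟨hnXY, hnYX⟩ := h
  obtain ⟨x, hxX, hxY⟩ := Finset.not_subset.mp hnXY
  obtain ⟨y, hyY, hyX⟩ := Finset.not_subset.mp hnYX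
  obtain ⟨z, hz⟩ := hXY
  rw [Finset.mem_inter] at hz
  obtain ⟨hzX, hzY⟩ := hz
  obtain ⟨c, -, hXF, -, hXi, hXii⟩ := hX
  obtain ⟨c', -, hYF, -, hYi, hYii⟩ := hY
  have h1 : dist c z ≤ ε * dist c y := hXii y (hYF hyY) hyX z hzX
  have h2 : dist c' z ≤ ε * dist c' x := hYii x (hXF hxX) hxY z hzY
  have h3 : dist y z ≤ ε * dist c' z := hYi y hyY z hzY z hzY
  have h4 : dist x z ≤ ε * dist c z := hXi x hxX z hzX z hzX
  have h5 : dist c y ≤ dist c z + dist z y := dist_triangle c z y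
  have h6 : dist c' x ≤ dist c' z + dist z x := dist_triangle c' z x
  have hzy : dist z y = dist y z := dist_comm z y
  have hzx : dist z x = dist x z := dist_comm z x
  have ha : (0:ℝ) ≤ dist c z := dist_nonneg
  have hb : (0:ℝ) ≤ dist c' z := dist_nonneg
  have hyz : (0:ℝ) ≤ dist y z := dist_nonneg
  -- a ≤ ε a + ε² b,  b ≤ ε b + ε² a  ⇒ a = b = 0
  have ka : dist c z ≤ ε * dist c z + ε * (ε * dist c' z) := by nlinarith
  have kb : dist c' z ≤ ε * dist c' z + ε * (ε * dist c z) := by nlinarith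
  have hsum : dist c z + dist c' z ≤ 0 := by
    nlinarith [mul_nonneg (sub_nonneg.mpr hε1.le) (add_nonneg ha hb),
      mul_nonneg hε0.le (mul_nonneg (sub_nonneg.mpr hε1.le) (add_nonneg ha hb))]
  have ha0 : dist c z = 0 := by linarith
  have hb0 : dist c' z = 0 := by linarith
  have : dist y z ≤ 0 := by nlinarith
  have hyz0 : y = z := dist_le_zero.mp this
  exact hyX (hyz0 ▸ hzX)
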